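/- A dual certificate certifies the exact value of the atomic norm. Let d be a positive integer, let u ∈ ℂ^d with ‖u‖₂ = 1, let r_0, …, r_{L−1} ∈ [0,1)² be distinct, let α_0, …, α_{L−1} ∈ ℂ be nonzero, and set Z = Σ_{ℓ=0}^{L−1} α_ℓ · u a(r_ℓ)^H. Suppose there exists a matrix W ∈ ℂ^(d×MP) such that ‖W a(r)‖₂ ≤ 1 for every r ∈ [0,1)² and W a(r_ℓ) = sign(α_ℓ) · u for every ℓ. Then ‖Z‖_A = Σ_{ℓ=0}^{L−1} |α_ℓ|. -/

import Mathlib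

open scoped BigOperators ComplexConjugate ENNReal Matrix

noncomputable section

namespace DBD

/-- Index set for `ℂ^(MP)` with `M = 2N+1`: pairs `v = (n,p)`,
`n ∈ {-N,…,N}` (encoded via `Fin (2N+1)` shifted by `N`) and `p ∈ {0,…,P-1}`. -/
abbrev Idx (N P : ℕ) := Fin (2 * N + 1) × Fin P

/-- The atom vector `a(r) ∈ ℂ^(MP)` with `[a(r)]_(n,p) = exp(2πi(τ n + ν p))`,
where the first index encodes `n = v.1 - N ∈ {-N,…,N}`. -/
def atom (N P : ℕ) (r : ℝ × ℝ) : Idx N P → ℂ := fun v =>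
  Complex.exp (2 * (Real.pi : ℂ) * Complex.I *
    ((r.1 : ℂ) * (((((v.1 : ℕ) : ℤ) - (N : ℤ)) : ℤ) : ℂ) + (r.2 : ℂ) * ((v.2 : ℕ) : ℂ)))

/-- The parameter domain `[0,1)²`. -/
def box : Set (ℝ × ℝ) := Set.Ico (0 : ℝ) 1 ×ˢ Set.Ico (0 : ℝ) 1

/-- The rank-one atom matrix `u a(r)ᴴ ∈ ℂ^(d×MP)`. -/
def atomMat (N P : ℕ) {d : ℕ} (u : Fin d → ℂ) (r : ℝ × ℝ) :
    Matrix (Fin d) (Idx N P) ℂ := fun i v => u i * conj (atom N P r v)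

/-- Euclidean (ℓ₂) norm on `ℂ^d`. -/
def enorm2 {d : ℕ} (x : Fin d → ℂ) : ℝ := Real.sqrt (∑ i, ‖x i‖ ^ 2)

/-- The atomic norm `‖Z‖_A ∈ [0,∞]`: infimum of `Σ_ℓ |α_ℓ|` over decompositions
`Z = Σ_ℓ α_ℓ · u a(r_ℓ)ᴴ` with a single unit-norm `u` and `r_ℓ ∈ [0,1)²`;
`+∞` (the infimum over the empty set) if no decomposition exists. -/
def anorm (N P : ℕ) {d : ℕ} (Z : Matrix (Fin d) (Idx N P) ℂ) : ℝ≥0∞ :=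
  sInf {x : ℝ≥0∞ | ∃ (L : ℕ) (α : Fin L → ℂ) (rs : Fin L → ℝ × ℝ) (u : Fin d → ℂ),
    enorm2 u = 1 ∧ (∀ ℓ, rs ℓ ∈ box) ∧
    Z = ∑ ℓ, α ℓ • atomMat N P u (rs ℓ) ∧
    x = ENNReal.ofReal (∑ ℓ, ‖α ℓ‖)}

/-- Standard inner product `⟨x,y⟩ = xᴴ y` on `ℂ^(MP)`. -/
def vinner (N P : ℕ) (x y : Idx N P → ℂ) : ℂ := ∑ v, conj (x v) * y v

/-- Frobenius inner product `⟨A,B⟩ = Tr(Aᴴ B)`. -/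
def finner {m n : Type*} [Fintype m] [Fintype n] (A B : Matrix m n ℂ) : ℂ :=
  (Aᴴ * B).trace

/-- `sign(c) = c / |c|` for complex `c`. -/
def csign (c : ℂ) : ℂ := c / ((‖c‖ : ℝ) : ℂ)

/-- The trace-form measurement operator `[א(Z)]_v = Tr(G_v Z)`. -/
def aleph (N P : ℕ) {d : ℕ} (G : Idx N P → Matrix (Idx N P) (Fin d) ℂ)
    (Z : Matrix (Fin d) (Idx N P) ℂ) : Idx N P → ℂ := fun v => (G v * Z).trace

/-- The adjoint operator `א*(q) = Σ_v [q]_v G_vᴴ`. -/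
def alephAdj (N P : ℕ) {d : ℕ} (G : Idx N P → Matrix (Idx N P) (Fin d) ℂ)
    (q : Idx N P → ℂ) : Matrix (Fin d) (Idx N P) ℂ := ∑ v, q v • (G v)ᴴ

/-- The dual atomic norm `‖W‖*_A = sup{ ⟨U,W⟩_ℝ : ‖U‖_A ≤ 1 }`. -/
def dualNorm (N P : ℕ) {d : ℕ} (W : Matrix (Fin d) (Idx N P) ℂ) : ℝ :=
  sSup {x : ℝ | ∃ U : Matrix (Fin d) (Idx N P) ℂ, anorm N P U ≤ 1 ∧ x = (finner U W).re}

end DBD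

open DBD

lemma DBD.enorm2_nonneg {d : ℕ} (x : Fin d → ℂ) : 0 ≤ enorm2 x :=
  Real.sqrt_nonneg _

lemma DBD.abs_sum_conj_mul_le {d : ℕ} (a b : Fin d → ℂ) :
    ‖∑ i, conj (a i) * b i‖ ≤ enorm2 a * enorm2 b := by
  have h1 : ‖∑ i, conj (a i) * b i‖
      ≤ ∑ i, ‖a i‖ * ‖b i‖ := by
    refine (norm_sum_le _ _).trans_eq ?_
    simp [map_mul]
  have hnn : 0 ≤ ∑ i, ‖a i‖ * ‖b i‖ :=
    Finset.sum_nonneg fun i _ => mul_nonneg (norm_nonneg _) (norm_nonneg _)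
  have hcs := Finset.sum_mul_sq_le_sq_mul_sq Finset.univ
    (fun i => ‖a i‖) (fun i => ‖b i‖)
  have h2 : (∑ i, ‖a i‖ * ‖b i‖)
      ≤ Real.sqrt (∑ i, ‖a i‖ ^ 2) * Real.sqrt (∑ i, ‖b i‖ ^ 2) := by
    calc ∑ i, ‖a i‖ * ‖b i‖
        = Real.sqrt ((∑ i, ‖a i‖ * ‖b i‖) ^ 2) :=
          (Real.sqrt_sq hnn).symm
      _ ≤ Real.sqrt ((∑ i, ‖a i‖ ^ 2) * ∑ i, ‖b i‖ ^ 2) :=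
          Real.sqrt_le_sqrt hcs
      _ = _ := Real.sqrt_mul (Finset.sum_nonneg fun i _ => sq_nonneg _) _
  exact h1.trans h2

lemma DBD.pairing_decomp (N P d L : ℕ) (W : Matrix (Fin d) (Idx N P) ℂ)
    (β : Fin L → ℂ) (u' : Fin d → ℂ) (ss : Fin L → ℝ × ℝ) :
    ∑ i, ∑ v, conj ((∑ ℓ, β ℓ • atomMat N P u' (ss ℓ)) i v) * W i v
      = ∑ ℓ, conj (β ℓ) * ∑ i, conj (u' i) * W.mulVec (atom N P (ss ℓ)) i := by
  have : ∀ i v, ((∑ ℓ, β ℓ • atomMat N P u' (ss ℓ)) i v)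
      = ∑ ℓ, β ℓ * (u' i * conj (atom N P (ss ℓ) v)) := by
    intro i v
    simp [Matrix.sum_apply, atomMat]
  calc ∑ i, ∑ v, conj ((∑ ℓ, β ℓ • atomMat N P u' (ss ℓ)) i v) * W i v
      = ∑ i, ∑ v, ∑ ℓ, conj (β ℓ) * (conj (u' i) * (atom N P (ss ℓ) v * W i v)) := by
        refine Finset.sum_congr rfl fun i _ => Finset.sum_congr rfl fun v _ => ?_
        rw [this i v, map_sum, Finset.sum_mul]
        refine Finset.sum_congr rfl fun ℓ _ => ?_
        simp only [map_mul, Complex.conj_conj]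
        ring
    _ = ∑ i, ∑ ℓ, ∑ v, conj (β ℓ) * (conj (u' i) * (atom N P (ss ℓ) v * W i v)) :=
        Finset.sum_congr rfl fun i _ => Finset.sum_comm
    _ = ∑ ℓ, ∑ i, ∑ v, conj (β ℓ) * (conj (u' i) * (atom N P (ss ℓ) v * W i v)) :=
        Finset.sum_comm
    _ = ∑ ℓ, conj (β ℓ) * ∑ i, conj (u' i) * W.mulVec (atom N P (ss ℓ)) i := by
        refine Finset.sum_congr rfl fun ℓ _ => ?_
        rw [Finset.mul_sum]
        refine Finset.sum_congr rfl fun i _ => ?_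
        simp only [Matrix.mulVec, dotProduct, Finset.mul_sum]
        refine Finset.sum_congr rfl fun v _ => ?_
        ring

/-- **A dual certificate certifies the exact value of the atomic norm:** if
`W a(r)` has norm at most one on `[0,1)²` and equals `sign(α_ℓ) u` at each `r_ℓ`,
then `‖Σ_ℓ α_ℓ u a(r_ℓ)ᴴ‖_A = Σ_ℓ |α_ℓ|`. -/
theorem atomicNorm_eq_of_certificate
    (N P : ℕ) (hN : 0 < N) (hP : 0 < P) (d : ℕ) (hd : 0 < d) (L : ℕ)
    (u : Fin d → ℂ) (hu : enorm2 u = 1)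
    (rs : Fin L → ℝ × ℝ) (hrs : ∀ ℓ, rs ℓ ∈ box)
    (hrs_distinct : Function.Injective rs)
    (α : Fin L → ℂ) (hα : ∀ ℓ, α ℓ ≠ 0)
    (Z : Matrix (Fin d) (Idx N P) ℂ)
    (hZ : Z = ∑ ℓ, α ℓ • atomMat N P u (rs ℓ))
    (W : Matrix (Fin d) (Idx N P) ℂ)
    (hW_bound : ∀ r ∈ box, enorm2 (W.mulVec (atom N P r)) ≤ 1)
    (hW_interp : ∀ ℓ, W.mulVec (atom N P (rs ℓ)) = csign (α ℓ) • u) :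
    anorm N P Z = ENNReal.ofReal (∑ ℓ, ‖α ℓ‖) := by
  have habs_ne : ∀ c : ℂ, c ≠ 0 → (‖c‖ : ℂ) ≠ 0 := fun c hc => by
    exact_mod_cast norm_ne_zero_iff.mpr hc
  have hconj_csign : ∀ c : ℂ, c ≠ 0 → conj c * csign c = (‖c‖ : ℂ) := by
    intro c hc
    unfold csign
    rw [mul_div_assoc', mul_comm, Complex.mul_conj, Complex.normSq_eq_norm_sq]
    rw [sq, Complex.ofReal_mul]
    field_simp
  have hsumu : (∑ i, ‖u i‖ ^ 2) = 1 := by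
    have h := hu
    unfold enorm2 at h
    nlinarith [Real.sq_sqrt (show (0:ℝ) ≤ ∑ i, ‖u i‖ ^ 2 from
      Finset.sum_nonneg fun i _ => sq_nonneg _)]
  have hinner_uu : (∑ i, conj (u i) * u i) = (1 : ℂ) := by
    have : ∀ i, conj (u i) * u i = ((‖u i‖ ^ 2 : ℝ) : ℂ) := by
      intro i
      rw [mul_comm, Complex.mul_conj, Complex.normSq_eq_norm_sq]
    rw [Finset.sum_congr rfl fun i _ => this i, ← Complex.ofReal_sum, hsumu,
      Complex.ofReal_one]
  set S := ∑ ℓ, ‖α ℓ‖ with hS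
  have hS0 : 0 ≤ S := Finset.sum_nonneg fun ℓ _ => norm_nonneg _
  -- the pairing of Z with W equals S
  have hfZ : ∑ i, ∑ v, conj (Z i v) * W i v = (S : ℂ) := by
    rw [hZ, DBD.pairing_decomp, hS, Complex.ofReal_sum]
    refine Finset.sum_congr rfl fun ℓ _ => ?_
    rw [hW_interp ℓ]
    have h1 : ∑ i, conj (u i) * (csign (α ℓ) • u) i
        = csign (α ℓ) * ∑ i, conj (u i) * u i := by
      rw [Finset.mul_sum]
      refine Finset.sum_congr rfl fun i _ => ?_
      simp only [Pi.smul_apply, smul_eq_mul]; ring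
    rw [h1, hinner_uu, mul_one, hconj_csign _ (hα ℓ)]
  refine le_antisymm ?_ ?_
  · exact sInf_le ⟨L, α, rs, u, hu, hrs, hZ, rfl⟩
  · refine le_sInf ?_
    rintro x ⟨L', β, ss, u', h1, h2, h3, rfl⟩
    refine ENNReal.ofReal_le_ofReal ?_
    -- pairing of Z with W via the other decomposition
    have hfZ' : ∑ i, ∑ v, conj (Z i v) * W i v
        = ∑ k, conj (β k) * ∑ i, conj (u' i) * W.mulVec (atom N P (ss k)) i := by
      rw [h3, DBD.pairing_decomp]
    have hbound : ‖(S : ℂ)‖ ≤ ∑ k, ‖β k‖ := by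
      rw [← hfZ, hfZ']
      calc ‖∑ k, conj (β k) * ∑ i, conj (u' i) * W.mulVec (atom N P (ss k)) i‖
          ≤ ∑ k, ‖conj (β k) * ∑ i, conj (u' i) * W.mulVec (atom N P (ss k)) i‖ :=
            norm_sum_le _ _
        _ ≤ ∑ k, ‖β k‖ := by
            refine Finset.sum_le_sum fun k _ => ?_
            rw [norm_mul, Complex.norm_conj]
            have hcs : ‖∑ i, conj (u' i) * W.mulVec (atom N P (ss k)) i‖
                ≤ enorm2 u' * enorm2 (W.mulVec (atom N P (ss k))) :=
              DBD.abs_sum_conj_mul_le _ _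
            have : ‖∑ i, conj (u' i) * W.mulVec (atom N P (ss k)) i‖ ≤ 1 := by
              refine hcs.trans ?_
              rw [h1, one_mul]
              exact hW_bound _ (h2 k)
            calc ‖β k‖ * ‖∑ i, conj (u' i) * W.mulVec (atom N P (ss k)) i‖
                ≤ ‖β k‖ * 1 :=
                  mul_le_mul_of_nonneg_left this (norm_nonneg _)
              _ = ‖β k‖ := mul_one _
    calc S = ‖(S : ℂ)‖ := by rw [Complex.norm_real, Real.norm_eq_abs, abs_of_nonneg hS0]
      _ ≤ ∑ k, ‖β k‖ := hbound
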